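/- Let S be a commutative antiring and A an n×n matrix over S such that both A·Aᵀ and Aᵀ·A are invertible diagonal matrices. Then for each i and all j ≠ k, A(i,j)·A(i,k) = 0 and A(j,i)·A(k,i) = 0, and for each i the row sum lᵢ = Σ_k A(i,k) is an invertible element of S. -/

import Mathlib

open Matrix

private lemma sum_zero_each {S : Type*} [CommSemiring S]
    (hzs : ∀ a b : S, a + b = 0 → a = 0 ∧ b = 0)
    {ι : Type*} [DecidableEq ι] (s : Finset ι) (f : ι → S) (h : ∑ i ∈ s, f i = 0) :
    ∀ i ∈ s, f i = 0 := by
  induction s using Finset.induction_on with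
  | empty => simp
  | insert a s hi ih =>
    rw [Finset.sum_insert hi] at h
    obtain ⟨h1, h2⟩ := hzs _ _ h
    intro i hi'
    rcases Finset.mem_insert.mp hi' with rfl | hi'
    · exact h1
    · exact ih h2 i hi'

/-- If `A * Aᵀ` and `Aᵀ * A` are invertible diagonal matrices over a commutative antiring,
then entries in the same row (resp. column) are pairwise orthogonal, and every row sum is
an invertible element of `S`. -/
theorem stmt_7 {S : Type*} [CommSemiring S]
    (hzs : ∀ a b : S, a + b = 0 → a = 0 ∧ b = 0)
    (n : ℕ) (A : Matrix (Fin n) (Fin n) S)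
    (hd1 : (A * Aᵀ).IsDiag) (hd2 : (Aᵀ * A).IsDiag)
    (hi1 : ∃ B, A * Aᵀ * B = 1 ∧ B * (A * Aᵀ) = 1)
    (hi2 : ∃ B, Aᵀ * A * B = 1 ∧ B * (Aᵀ * A) = 1) :
    (∀ i j k, j ≠ k → A i j * A i k = 0 ∧ A j i * A k i = 0) ∧
    (∀ i, ∃ u : S, (∑ k, A i k) * u = 1) := by
  have key1 : ∀ (i : Fin n) (j k : Fin n), j ≠ k → A i j * A i k = 0 := by
    intro i j k hjk
    have h0 : (Aᵀ * A) j k = 0 := hd2 hjk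
    rw [Matrix.mul_apply] at h0
    have := sum_zero_each hzs Finset.univ _ h0 i (Finset.mem_univ i)
    simpa [Matrix.transpose_apply] using this
  have key2 : ∀ (i : Fin n) (j k : Fin n), j ≠ k → A j i * A k i = 0 := by
    intro i j k hjk
    have h0 : (A * Aᵀ) j k = 0 := hd1 hjk
    rw [Matrix.mul_apply] at h0
    have := sum_zero_each hzs Finset.univ _ h0 i (Finset.mem_univ i)
    simpa [Matrix.transpose_apply] using this
  refine ⟨fun i j k h => ⟨key1 i j k h, key2 i j k h⟩, fun i => ?_⟩
  obtain ⟨B, hB, -⟩ := hi1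
  refine ⟨B i i * (∑ k, A i k), ?_⟩
  have hsq : (∑ k, A i k) * (∑ k, A i k) = (A * Aᵀ) i i := by
    rw [Finset.sum_mul_sum, Matrix.mul_apply]
    refine Finset.sum_congr rfl fun j _ => ?_
    rw [Finset.sum_eq_single j]
    · simp [Matrix.transpose_apply]
    · intro k _ hk
      exact key1 i j k (Ne.symm hk)
    · simp
  have hBi : (A * Aᵀ) i i * B i i = 1 := by
    have := congrArg (fun M => M i i) hB
    simp only [Matrix.mul_apply, Matrix.one_apply_eq] at this
    rw [Finset.sum_eq_single i] at this
    · exact this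
    · intro k _ hk
      rw [show (∑ j, A i j * Aᵀ j k) = (A * Aᵀ) i k from (Matrix.mul_apply ..).symm,
        hd1 (Ne.symm hk), zero_mul]
    · simp
  calc (∑ k, A i k) * (B i i * ∑ k, A i k)
      = (A * Aᵀ) i i * B i i := by rw [← hsq]; ring
    _ = 1 := hBi
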